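/- Let u', v' ∈ ℂ and u₁,…,u₆, v₁,…,v₆ ∈ ℂ (indices taken modulo 6, so u₀ = u₆, u₇ = u₁, v₇ = v₁) satisfy, for k = 1,2,3, the relations (u₂ₖ₋₁ − u₂ₖ)·(v₂ₖ − v') = (u' − u₂ₖ₋₁)·(v' − v₂ₖ₋₁) and (u₂ₖ₊₁ − u₂ₖ)·(v₂ₖ − v') = (u' − u₂ₖ₊₁)·(v' − v₂ₖ₊₁). Assume further that for each odd index j ∈ {1,3,5}: u' ≠ uⱼ and |u_{j−1} − uⱼ| = |u_{j+1} − uⱼ| = |u' − uⱼ| (the points u_{j−1}, u_{j+1}, u' are equidistant from uⱼ). Then all six distances |vⱼ − v'| (j = 1,…,6) are equal, i.e. v₁,…,v₆ lie on a circle centered at v'. -/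

import Mathlib

lemma fgh_aux (a b x y : ℂ) (h : a * x = b * y)
    (hab : ‖a‖ = ‖b‖) (hb : b ≠ 0) :
    ‖x‖ = ‖y‖ := by
  have h' := congrArg norm h
  rw [norm_mul, norm_mul, hab] at h'
  exact mul_left_cancel₀ (norm_ne_zero_iff.2 hb) h'

/-- If in the fgh-system the odd-indexed neighbors of a vertex in the
`u`-lattice are centers of circles through the adjacent even-indexed points
and through `u'`, then the six `v`-values of the surrounding hexagon lie on a
circle centered at `v'`. -/
theorem fgh_circularity
    (u' v' u₁ u₂ u₃ u₄ u₅ u₆ v₁ v₂ v₃ v₄ v₅ v₆ : ℂ)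
    (h1 : (u₁ - u₂) * (v₂ - v') = (u' - u₁) * (v' - v₁))
    (h2 : (u₃ - u₂) * (v₂ - v') = (u' - u₃) * (v' - v₃))
    (h3 : (u₃ - u₄) * (v₄ - v') = (u' - u₃) * (v' - v₃))
    (h4 : (u₅ - u₄) * (v₄ - v') = (u' - u₅) * (v' - v₅))
    (h5 : (u₅ - u₆) * (v₆ - v') = (u' - u₅) * (v' - v₅))
    (h6 : (u₁ - u₆) * (v₆ - v') = (u' - u₁) * (v' - v₁))
    (hu1 : u' ≠ u₁) (hu3 : u' ≠ u₃) (hu5 : u' ≠ u₅)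
    (heq1a : ‖u₆ - u₁‖ = ‖u₂ - u₁‖)
    (heq1b : ‖u₂ - u₁‖ = ‖u' - u₁‖)
    (heq3a : ‖u₂ - u₃‖ = ‖u₄ - u₃‖)
    (heq3b : ‖u₄ - u₃‖ = ‖u' - u₃‖)
    (heq5a : ‖u₄ - u₅‖ = ‖u₆ - u₅‖)
    (heq5b : ‖u₆ - u₅‖ = ‖u' - u₅‖) :
    ‖v₁ - v'‖ = ‖v₂ - v'‖ ∧
    ‖v₂ - v'‖ = ‖v₃ - v'‖ ∧
    ‖v₃ - v'‖ = ‖v₄ - v'‖ ∧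
    ‖v₄ - v'‖ = ‖v₅ - v'‖ ∧
    ‖v₅ - v'‖ = ‖v₆ - v'‖ := by
  have n1 : u' - u₁ ≠ 0 := sub_ne_zero.2 hu1
  have n3 : u' - u₃ ≠ 0 := sub_ne_zero.2 hu3
  have n5 : u' - u₅ ≠ 0 := sub_ne_zero.2 hu5
  have a1 : ‖u₁ - u₂‖ = ‖u' - u₁‖ := by
    rw [norm_sub_rev]; exact heq1b
  have a2 : ‖u₃ - u₂‖ = ‖u' - u₃‖ := by
    rw [norm_sub_rev]; exact heq3a.trans heq3b
  have a3 : ‖u₃ - u₄‖ = ‖u' - u₃‖ := by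
    rw [norm_sub_rev]; exact heq3b
  have a4 : ‖u₅ - u₄‖ = ‖u' - u₅‖ := by
    rw [norm_sub_rev]; exact heq5a.trans heq5b
  have a5 : ‖u₅ - u₆‖ = ‖u' - u₅‖ := by
    rw [norm_sub_rev]; exact heq5b
  have e1 := fgh_aux _ _ _ _ h1 a1 n1
  have e2 := fgh_aux _ _ _ _ h2 a2 n3
  have e3 := fgh_aux _ _ _ _ h3 a3 n3
  have e4 := fgh_aux _ _ _ _ h4 a4 n5
  have e5 := fgh_aux _ _ _ _ h5 a5 n5
  rw [norm_sub_rev v' v₁] at e1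
  rw [norm_sub_rev v' v₃] at e2 e3
  rw [norm_sub_rev v' v₅] at e4 e5
  exact ⟨e1.symm, e2, e3.symm, e4, e5.symm⟩
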